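/- arXiv:math/0405560 — 3 statements merged into one kernel-verified Lean document; each statement's English description precedes it below -/
import Mathlib

section
/- Let G be a torsion-free abelian group (written multiplicatively) and A = (x_1, ..., x_q) a q-tuple of elements of G with 1 < s < r ≤ q. Say A has property P_{r,s} if for any r indices p_1, ..., p_r and any subset I ⊂ {p_1,...,p_r} with #I = s, there exists a subset J ⊂ {p_1,...,p_r} with J ≠ I and #J = s such that ∏_{i∈I} x_i = ∏_{j∈J} x_j. If A has property P_{r,s}, then there exist q - r + 2 indices i_1, ..., i_{q-r+2} in {1,...,q} such that x_{i_1} = ... = x_{i_{q-r+2}}. -/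
open Finset

lemma exists_rep.{u} {G : Type u} [CommGroup G]
    (hG : ∀ g : G, ∀ k : ℕ, 1 ≤ k → g ^ k = 1 → g = 1)
    {q : ℕ} (x : Fin q → G) :
    ∃ (L : Type u) (_ : AddCommGroup L) (_ : LinearOrder L) (_ : IsOrderedAddMonoid L) (v : Fin q → L),
      (∀ i j, v i = v j → x i = x j) ∧
      (∀ I J : Finset (Fin q), (∏ i ∈ I, x i) = ∏ j ∈ J, x j →
        ∑ i ∈ I, v i = ∑ j ∈ J, v j) := by
  haveI : NoZeroSMulDivisors ℤ (Additive G) := by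
    constructor
    intro c g h
    by_cases hc : c = 0
    · exact Or.inl hc
    · right
      have h1 : (Additive.toMul g) ^ c = 1 := by
        rw [← toMul_zsmul, h]; rfl
      have h2 : (Additive.toMul g) ^ (c.natAbs) = 1 := by
        rcases Int.natAbs_eq c with hh | hh
        · rw [← zpow_natCast, ← hh, h1]
        · rw [← zpow_natCast, ← neg_neg (c.natAbs : ℤ), ← hh, zpow_neg, h1, inv_one]
      have := hG (Additive.toMul g) c.natAbs
        (Nat.one_le_iff_ne_zero.2 (Int.natAbs_ne_zero.2 hc)) h2
      exact Additive.toMul.injective this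
  set S : Submodule ℤ (Additive G) :=
    Submodule.span ℤ (Set.range fun i => Additive.ofMul (x i)) with hS
  haveI : Module.Finite ℤ S := Module.Finite.span_of_finite ℤ (Set.finite_range _)
  haveI : Module.Free ℤ S := Module.free_of_finite_type_torsion_free'
  set ι := Module.Free.ChooseBasisIndex ℤ S with hι
  letI : LinearOrder ι := IsWellOrder.linearOrder WellOrderingRel
  set b := Module.Free.chooseBasis ℤ S with hb
  let a : Fin q → S := fun i => ⟨Additive.ofMul (x i), Submodule.subset_span ⟨i, rfl⟩⟩
  let e : (ι →₀ ℤ) ≃+ Lex (ι →₀ ℤ) := ⟨toLex, fun _ _ => rfl⟩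
  refine ⟨Lex (ι →₀ ℤ), inferInstance, inferInstance, inferInstance, fun i => e (b.repr (a i)), ?_, ?_⟩
  · intro i j hij
    have : a i = a j := b.repr.injective (e.injective hij)
    have := congrArg Subtype.val this
    exact Additive.ofMul.injective this
  · intro I J h
    have hA : ∑ i ∈ I, a i = ∑ j ∈ J, a j := by
      apply Subtype.ext
      rw [AddSubmonoidClass.coe_finset_sum, AddSubmonoidClass.coe_finset_sum]
      show ∑ i ∈ I, Additive.ofMul (x i) = ∑ j ∈ J, Additive.ofMul (x j)
      rw [← ofMul_prod, ← ofMul_prod, h]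
    rw [← map_sum, ← map_sum, ← map_sum, ← map_sum, hA]

/-- Fujimoto's combinatorial lemma: if a `q`-tuple in a torsion-free abelian
group has property `P_{r,s}`, then some `q - r + 2` of its entries are equal. -/
theorem stmt_0 {G : Type*} [CommGroup G]
    (hG : ∀ g : G, ∀ k : ℕ, 1 ≤ k → g ^ k = 1 → g = 1)
    (q r s : ℕ) (hs : 1 < s) (hsr : s < r) (hrq : r ≤ q)
    (x : Fin q → G)
    (hP : ∀ P : Finset (Fin q), P.card = r →
      ∀ I ⊆ P, I.card = s →
        ∃ J ⊆ P, J ≠ I ∧ J.card = s ∧ (∏ i ∈ I, x i) = ∏ j ∈ J, x j) :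
    ∃ T : Finset (Fin q), T.card = q - r + 2 ∧ ∀ i ∈ T, ∀ j ∈ T, x i = x j := by
  classical
  obtain ⟨L, _inst, _inst2, _inst3, v, hsep, hhom⟩ := exists_rep hG x
  set σ := Tuple.sort v with hσ
  have hmono := Tuple.monotone_sort v
  have hq : 0 < q := by omega
  set w : ℕ → L := fun n => if h : n < q then v (σ ⟨n, h⟩) else v (σ ⟨0, hq⟩) with hw
  have hwv : ∀ (u : Fin q), w u.val = v (σ u) := by
    intro u
    simp only [hw, dif_pos u.isLt, Fin.eta]
  have hwm : ∀ a b : ℕ, a ≤ b → b < q → w a ≤ w b := by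
    intro a b hab hb
    have ha : a < q := lt_of_le_of_lt hab hb
    simp only [hw, dif_pos ha, dif_pos hb]
    exact hmono (show (⟨a, ha⟩ : Fin q) ≤ ⟨b, hb⟩ from hab)
  -- transported hypothesis
  have finj : Function.Injective (fun k : Fin q => ((σ.symm k : Fin q) : ℕ)) :=
    fun a' b' hab => σ.symm.injective (Fin.val_injective hab)
  have hQ : ∀ P : Finset ℕ, (∀ n ∈ P, n < q) → P.card = r →
      ∀ I, I ⊆ P → I.card = s →
      ∃ J ⊆ P, J ≠ I ∧ J.card = s ∧ ∑ n ∈ I, w n = ∑ n ∈ J, w n := by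
    intro P hPb hPc I hIP hIc
    have hIb : ∀ n ∈ I, n < q := fun n hn => hPb n (hIP hn)
    set Pf := P.attachFin hPb with hPf
    set If := I.attachFin hIb with hIf
    set Pσ := Pf.image σ with hPσ
    set Iσ := If.image σ with hIσ
    have hPσc : Pσ.card = r := by
      rw [hPσ, Finset.card_image_of_injective _ σ.injective, Finset.card_attachFin, hPc]
    have hIσc : Iσ.card = s := by
      rw [hIσ, Finset.card_image_of_injective _ σ.injective, Finset.card_attachFin, hIc]
    have hIσP : Iσ ⊆ Pσ := by
      apply Finset.image_subset_image
      intro k hk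
      rw [Finset.mem_attachFin] at hk ⊢
      exact hIP hk
    obtain ⟨J₀, hJ₀P, hJ₀ne, hJ₀c, hprod⟩ := hP Pσ hPσc Iσ hIσP hIσc
    have hsum0 : ∑ k ∈ Iσ, v k = ∑ k ∈ J₀, v k := hhom _ _ hprod
    set J := J₀.image (fun k => ((σ.symm k : Fin q) : ℕ)) with hJ
    have hmemJ : ∀ k ∈ J₀, ((σ.symm k : Fin q) : ℕ) ∈ P := by
      intro k hk
      have := hJ₀P hk
      rw [hPσ, Finset.mem_image] at this
      obtain ⟨u, hu, rfl⟩ := this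
      rw [Equiv.symm_apply_apply]
      rw [hPf, Finset.mem_attachFin] at hu
      exact hu
    refine ⟨J, ?_, ?_, ?_, ?_⟩
    · intro n hn
      rw [hJ, Finset.mem_image] at hn
      obtain ⟨k, hk, rfl⟩ := hn
      exact hmemJ k hk
    · intro hEq
      apply hJ₀ne
      ext k
      constructor
      · intro hk
        have hkJ : ((σ.symm k : Fin q) : ℕ) ∈ J := Finset.mem_image_of_mem _ hk
        rw [hEq] at hkJ
        rw [hIσ, Finset.mem_image]
        exact ⟨σ.symm k, by rw [hIf, Finset.mem_attachFin]; exact hkJ,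
          by rw [Equiv.apply_symm_apply]⟩
      · intro hk
        rw [hIσ, Finset.mem_image] at hk
        obtain ⟨u, hu, rfl⟩ := hk
        rw [hIf, Finset.mem_attachFin] at hu
        rw [← hEq, hJ, Finset.mem_image] at hu
        obtain ⟨k', hk', hval⟩ := hu
        have : σ.symm k' = u := Fin.val_injective hval
        have : k' = σ u := by rw [← this, Equiv.apply_symm_apply]
        rwa [← this]
    · rw [hJ, Finset.card_image_of_injective _ finj, hJ₀c]
    · have hIimg : If.image (fun u : Fin q => (u : ℕ)) = I := by
        ext n
        rw [Finset.mem_image]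
        constructor
        · rintro ⟨u, hu, rfl⟩
          rw [hIf, Finset.mem_attachFin] at hu
          exact hu
        · intro hn
          exact ⟨⟨n, hIb n hn⟩, by rw [hIf, Finset.mem_attachFin]; exact hn, rfl⟩
      have h1 : ∑ n ∈ I, w n = ∑ k ∈ Iσ, v k := by
        rw [← hIimg, Finset.sum_image (fun a' _ b' _ h => Fin.val_injective h), hIσ,
          Finset.sum_image (fun a' _ b' _ h => σ.injective h)]
        exact Finset.sum_congr rfl fun u _ => hwv u
      have h2 : ∑ n ∈ J, w n = ∑ k ∈ J₀, v k := by
        rw [hJ, Finset.sum_image (fun a' _ b' _ h => finj h)]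
        refine Finset.sum_congr rfl fun k _ => ?_
        rw [hwv (σ.symm k), Equiv.apply_symm_apply]
      rw [h1, h2, hsum0]
  -- combinatorial core
  set m := r - s with hm
  have key : ∀ j, m ≤ j → j ≤ q - s → w j = w (m - 1) := by
    intro j hj1 hj2
    set Tt := Finset.Ico (q - s + 1) q with hTt
    set P := insert j (Finset.range m ∪ Tt) with hPdef
    have hPb : ∀ n ∈ P, n < q := by
      intro n hn
      rw [hPdef, Finset.mem_insert, Finset.mem_union, Finset.mem_range, hTt,
        Finset.mem_Ico] at hn
      omega
    have hjT : j ∉ Finset.range m ∪ Tt := by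
      rw [Finset.mem_union, Finset.mem_range, hTt, Finset.mem_Ico]
      omega
    have hdis : Disjoint (Finset.range m) Tt := by
      rw [Finset.disjoint_left]
      intro n hn hn'
      rw [Finset.mem_range] at hn
      rw [hTt, Finset.mem_Ico] at hn'
      omega
    have hPc : P.card = r := by
      rw [hPdef, Finset.card_insert_of_notMem hjT, Finset.card_union_of_disjoint hdis,
        Finset.card_range, hTt, Nat.card_Ico]
      omega
    have hjT' : j ∉ Tt := by rw [hTt, Finset.mem_Ico]; omega
    set I := insert j Tt with hIdef
    have hIP : I ⊆ P := by
      intro n hn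
      rw [hIdef, Finset.mem_insert] at hn
      rw [hPdef, Finset.mem_insert, Finset.mem_union]
      tauto
    have hIc : I.card = s := by
      rw [hIdef, Finset.card_insert_of_notMem hjT', hTt, Nat.card_Ico]
      omega
    obtain ⟨J, hJP, hJne, hJc, hsum⟩ := hQ P hPb hPc I hIP hIc
    have hne' : (I \ J).Nonempty := by
      rw [Finset.sdiff_nonempty]
      intro hsub
      exact hJne (Finset.eq_of_subset_of_card_le hsub (by rw [hJc, hIc])).symm
    set t := (I \ J).card with htdef
    have ht : 0 < t := Finset.card_pos.mpr hne'
    have htJ : (J \ I).card = t := Finset.card_sdiff_comm (by rw [hJc, hIc])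
    have hsd : ∑ n ∈ J \ I, w n = ∑ n ∈ I \ J, w n := by
      have h1 := Finset.sum_inter_add_sum_sdiff I J w
      have h2 := Finset.sum_inter_add_sum_sdiff J I w
      rw [Finset.inter_comm] at h2
      have h3 : ∑ n ∈ I ∩ J, w n + ∑ n ∈ I \ J, w n
          = ∑ n ∈ I ∩ J, w n + ∑ n ∈ J \ I, w n := by
        rw [h1, h2, hsum]
      exact (add_left_cancel h3).symm
    have hb1 : ∀ k ∈ J \ I, w k ≤ w (m - 1) := by
      intro k hk
      rw [Finset.mem_sdiff] at hk
      have hkP := hJP hk.1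
      have hkI := hk.2
      rw [hPdef, Finset.mem_insert, Finset.mem_union, Finset.mem_range] at hkP
      rw [hIdef, Finset.mem_insert] at hkI
      have hkm : k < m := by
        rcases hkP with h | h | h
        · exact absurd (Or.inl h) (fun hh => hkI (by tauto))
        · exact h
        · exact absurd (Or.inr h) (fun hh => hkI (by tauto))
      exact hwm k (m - 1) (by omega) (by omega)
    have hb2 : ∀ k ∈ I \ J, w j ≤ w k := by
      intro k hk
      rw [Finset.mem_sdiff] at hk
      have hkI := hk.1
      rw [hIdef, Finset.mem_insert, hTt, Finset.mem_Ico] at hkI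
      have : j ≤ k ∧ k < q := by omega
      exact hwm j k this.1 this.2
    have e1 : ∑ n ∈ J \ I, w n ≤ t • w (m - 1) := by
      rw [← htJ]
      exact Finset.sum_le_card_nsmul _ _ _ hb1
    have e2 : t • w j ≤ ∑ n ∈ I \ J, w n := Finset.card_nsmul_le_sum _ _ _ hb2
    have e3 : w (m - 1) ≤ w j := hwm (m - 1) j (by omega) (by omega)
    by_contra hne2
    have hlt : w (m - 1) < w j := lt_of_le_of_ne e3 fun hh => hne2 hh.symm
    have hlt2 : t • w (m - 1) < t • w j := nsmul_lt_nsmul_right ht.ne' hlt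
    have : t • w j ≤ t • w (m - 1) := e2.trans (hsd ▸ e1)
    exact absurd (this.trans_lt hlt2) (lt_irrefl _)
  -- conclusion
  have hb' : ∀ n ∈ Finset.Icc (m - 1) (q - s), n < q := by
    intro n hn
    rw [Finset.mem_Icc] at hn
    omega
  have key' : ∀ n, m - 1 ≤ n → n ≤ q - s → w n = w (m - 1) := by
    intro n h1 h2
    rcases eq_or_lt_of_le h1 with h | h
    · rw [← h]
    · exact key n (by omega) h2
  refine ⟨((Finset.Icc (m - 1) (q - s)).attachFin hb').image σ, ?_, ?_⟩
  · rw [Finset.card_image_of_injective _ σ.injective, Finset.card_attachFin, Nat.card_Icc]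
    omega
  · intro i hi j' hj'
    rw [Finset.mem_image] at hi hj'
    obtain ⟨u, hu, rfl⟩ := hi
    obtain ⟨u', hu', rfl⟩ := hj'
    rw [Finset.mem_attachFin, Finset.mem_Icc] at hu hu'
    apply hsep
    rw [← hwv u, ← hwv u', key' u.val hu.1 hu.2, key' u'.val hu'.1 hu'.2]
end

section
/- (Laplace expansion identity for the degeneracy determinant) Let K be a field, and for j = 1, ..., 2n+2 let a_j = (a_{j0}, ..., a_{jn}) ∈ K^{n+1} and h_j ∈ K. Consider the (2n+2)×(2n+2) matrix whose j-th row is (a_{j0}, ..., a_{jn}, h_j·a_{j0}, ..., h_j·a_{jn}). Then its determinant equals the sum over all subsets I = {i_0 < ... < i_n} ⊆ {1, ..., 2n+2} of size n+1 of (-1)^{n(n+1)/2 + i_0 + ... + i_n} · det(a_{i_r, j})_{0≤r,j≤n} · det(a_{i'_s, j})_{0≤s,j≤n} · ∏_{i∈I} h_i, where {i'_0 < ... < i'_n} is the complement of I in {1, ..., 2n+2}. -/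
namespace Stmt7

open Finset Equiv Matrix

/-! ### Sign via inversions -/

theorem sign_eq_signAux {n : ℕ} (f : Equiv.Perm (Fin (n+2))) :
    Equiv.Perm.sign f = Equiv.Perm.signAux f := by
  have h0 : ((0 : Fin (n+2)) ≠ 1) := by
    simp [Fin.ext_iff]
  have hsurj : Function.Surjective
      ⇑(MonoidHom.mk' Equiv.Perm.signAux Equiv.Perm.signAux_mul :
        Equiv.Perm (Fin (n+2)) →* ℤˣ) := by
    intro a
    rcases Int.units_eq_one_or a with rfl | rfl
    · exact ⟨1, Equiv.Perm.signAux_one _⟩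
    · exact ⟨Equiv.swap 0 1, Equiv.Perm.signAux_swap h0⟩
  exact (DFunLike.congr_fun (Equiv.Perm.eq_sign_of_surjective_hom hsurj) f).symm

theorem signAux_eq_pow {n : ℕ} (f : Equiv.Perm (Fin n)) :
    Equiv.Perm.signAux f =
      (-1) ^ ((Equiv.Perm.finPairsLT n).filter fun x => f x.1 ≤ f x.2).card := by
  rw [Equiv.Perm.signAux, Finset.prod_ite, Finset.prod_const, Finset.prod_const_one, mul_one]

theorem neg_one_pow_eq_of_even_add {M : Type*} [Monoid M] [HasDistribNeg M] {a b : ℕ}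
    (h : Even (a + b)) : (-1 : M) ^ a = (-1) ^ b := by
  rcases Nat.even_add.mp h with he
  by_cases ha : Even a
  · rw [ha.neg_one_pow, (he.mp ha).neg_one_pow]
  · rw [(Nat.not_even_iff_odd.mp ha).neg_one_pow,
      (Nat.not_even_iff_odd.mp fun hb => ha (he.mpr hb)).neg_one_pow]

end Stmt7

namespace Stmt7a
open Finset Equiv Matrix

variable {n : ℕ}

theorem card_compl' {S : Finset (Fin (2*n+2))} (hS : S.card = n+1) : Sᶜ.card = n+1 := by
  rw [Finset.card_compl, hS]
  simp only [Fintype.card_fin]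
  omega

/-- The shuffle: first half ↦ increasing enumeration of `Sᶜ`, second half ↦ that of `S`. -/
def sf (S : Finset (Fin (2*n+2))) (hS : S.card = n+1) (k : Fin (2*n+2)) : Fin (2*n+2) :=
  if hk : (k : ℕ) < n+1 then ((Sᶜ.orderIsoOfFin (card_compl' hS)) ⟨k, hk⟩ : Fin (2*n+2))
  else ((S.orderIsoOfFin hS) ⟨(k:ℕ) - (n+1), by have := k.isLt; omega⟩ : Fin (2*n+2))

theorem sf_mem_lt {S : Finset (Fin (2*n+2))} (hS : S.card = n+1) {k : Fin (2*n+2)}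
    (hk : (k : ℕ) < n+1) : sf S hS k ∈ Sᶜ := by
  rw [sf, dif_pos hk]; exact ((Sᶜ.orderIsoOfFin (card_compl' hS)) ⟨k, hk⟩).2

theorem sf_mem_ge {S : Finset (Fin (2*n+2))} (hS : S.card = n+1) {k : Fin (2*n+2)}
    (hk : ¬ (k : ℕ) < n+1) : sf S hS k ∈ S := by
  rw [sf, dif_neg hk]; exact ((S.orderIsoOfFin hS) ⟨(k:ℕ) - (n+1), by have := k.isLt; exact Nat.sub_lt_left_of_lt_add (by omega) (by omega)⟩).2

theorem sf_injective {S : Finset (Fin (2*n+2))} (hS : S.card = n+1) :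
    Function.Injective (sf S hS) := by
  intro k l hkl
  by_cases hk : (k : ℕ) < n+1 <;> by_cases hl : (l : ℕ) < n+1
  · rw [sf, sf, dif_pos hk, dif_pos hl] at hkl
    have := (Sᶜ.orderIsoOfFin (card_compl' hS)).injective (Subtype.coe_injective hkl)
    exact Fin.ext (by simpa [Fin.ext_iff] using this)
  · exact absurd ((Finset.mem_compl.mp (sf_mem_lt hS hk)))
      (by rw [hkl] at *; simp [sf_mem_ge hS hl])
  · exact absurd ((Finset.mem_compl.mp (sf_mem_lt hS hl)))
      (by rw [← hkl] at *; simp [sf_mem_ge hS hk])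
  · rw [sf, sf, dif_neg hk, dif_neg hl] at hkl
    have := (S.orderIsoOfFin hS).injective (Subtype.coe_injective hkl)
    have := Fin.mk.injEq _ _ _ _ ▸ this
    have hkl' : (k:ℕ) - (n+1) = (l:ℕ) - (n+1) := by simpa [Fin.ext_iff] using this
    exact Fin.ext (by omega)

theorem sf_lt_low {S : Finset (Fin (2*n+2))} (hS : S.card = n+1) {k l : Fin (2*n+2)}
    (hk : (k:ℕ) < n+1) (hl : (l:ℕ) < n+1) (h : k < l) : sf S hS k < sf S hS l := by
  rw [sf, sf, dif_pos hk, dif_pos hl]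
  exact Subtype.coe_lt_coe.mpr
    ((Sᶜ.orderIsoOfFin (card_compl' hS)).lt_iff_lt.mpr (Fin.mk_lt_mk.mpr (Fin.lt_def.mp h)))

theorem sf_lt_high {S : Finset (Fin (2*n+2))} (hS : S.card = n+1) {k l : Fin (2*n+2)}
    (hk : ¬ (k:ℕ) < n+1) (hl : ¬ (l:ℕ) < n+1) (h : k < l) : sf S hS k < sf S hS l := by
  rw [sf, sf, dif_neg hk, dif_neg hl]
  refine Subtype.coe_lt_coe.mpr ((S.orderIsoOfFin hS).lt_iff_lt.mpr ?_)
  have := Fin.lt_def.mp h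
  exact Fin.mk_lt_mk.mpr (by omega)

/-- The shuffle as a permutation. -/
noncomputable def se (S : Finset (Fin (2*n+2))) (hS : S.card = n+1) : Equiv.Perm (Fin (2*n+2)) :=
  Equiv.ofBijective _ (Finite.injective_iff_bijective.mp (sf_injective hS))

theorem se_apply (S : Finset (Fin (2*n+2))) (hS : S.card = n+1) (k : Fin (2*n+2)) :
    se S hS k = sf S hS k := rfl

end Stmt7a

namespace Stmt7a
open Finset Equiv Matrix
variable {n : ℕ}

theorem sf_apply_low {S : Finset (Fin (2*n+2))} (hS : S.card = n+1) (i : Fin (n+1)) :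
    sf S hS ⟨i.val, by omega⟩ = ((Sᶜ.orderIsoOfFin (card_compl' hS)) i : Fin (2*n+2)) := by
  rw [sf, dif_pos (show ((⟨i.val, by omega⟩ : Fin (2*n+2)):ℕ) < n+1 from i.isLt)]

theorem sf_apply_high {S : Finset (Fin (2*n+2))} (hS : S.card = n+1) (i : Fin (n+1)) :
    sf S hS ⟨n+1+i.val, by omega⟩ = ((S.orderIsoOfFin hS) i : Fin (2*n+2)) := by
  rw [sf, dif_neg (show ¬ ((⟨n+1+i.val, by omega⟩ : Fin (2*n+2)):ℕ) < n+1 by rw [show ((⟨n+1+i.val, by omega⟩ : Fin (2*n+2)):ℕ) = n+1+i.val from rfl]; omega)]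
  have h1 : (⟨((⟨n+1+i.val, by omega⟩ : Fin (2*n+2)):ℕ) - (n+1), by omega⟩ : Fin (n+1)) = i :=
    Fin.ext (by simp only [Fin.val_mk]; omega)
  exact congrArg _ (congrArg _ h1)

theorem cross {S : Finset (Fin (2*n+2))} (hS : S.card = n+1)
    {x : Σ _ : Fin (2*n+2), Fin (2*n+2)}
    (hx : x ∈ (Equiv.Perm.finPairsLT (2*n+2)).filter
      fun x => se S hS x.1 ≤ se S hS x.2) :
    (x.2:ℕ) < n+1 ∧ ¬ (x.1:ℕ) < n+1 ∧ sf S hS x.1 < sf S hS x.2 := by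
  obtain ⟨h1, h2⟩ := Finset.mem_filter.mp hx
  have hlt : x.2 < x.1 := Equiv.Perm.mem_finPairsLT.mp h1
  rw [se_apply, se_apply] at h2
  have hne : sf S hS x.1 ≠ sf S hS x.2 := fun e => hlt.ne (sf_injective hS e).symm
  have hslt : sf S hS x.1 < sf S hS x.2 := lt_of_le_of_ne h2 hne
  have h2lo : (x.2:ℕ) < n+1 := by
    by_contra h2hi
    have h1hi : ¬ (x.1:ℕ) < n+1 := fun h1lo => h2hi (by have := Fin.lt_def.mp hlt; omega)
    exact absurd (sf_lt_high hS h2hi h1hi hlt) (not_lt.mpr h2)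
  have h1hi : ¬ (x.1:ℕ) < n+1 := by
    intro h1lo
    have h2lo' : (x.2:ℕ) < n+1 := by have := Fin.lt_def.mp hlt; omega
    exact absurd (sf_lt_low hS h2lo' h1lo hlt) (not_lt.mpr h2)
  exact ⟨h2lo, h1hi, hslt⟩

set_option maxHeartbeats 1600000 in
theorem inv_card {S : Finset (Fin (2*n+2))} (hS : S.card = n+1) :
    ((Equiv.Perm.finPairsLT (2*n+2)).filter
      fun x => se S hS x.1 ≤ se S hS x.2).card =
    ((S ×ˢ Sᶜ).filter fun p => p.1 < p.2).card := by
  refine Finset.card_bij' (fun x _ => (sf S hS x.1, sf S hS x.2))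
    (fun p hp =>
      ⟨⟨(n+1) + ((S.orderIsoOfFin hS).symm
          ⟨p.1, (Finset.mem_product.mp (Finset.mem_filter.mp hp).1).1⟩ : Fin (n+1)).val,
        by omega⟩,
       ⟨((Sᶜ.orderIsoOfFin (card_compl' hS)).symm
          ⟨p.2, (Finset.mem_product.mp (Finset.mem_filter.mp hp).1).2⟩ : Fin (n+1)).val,
        by omega⟩⟩)
    ?_ ?_ ?_ ?_
  · intro x hx
    obtain ⟨h2lo, h1hi, hslt⟩ := cross hS hx
    refine Finset.mem_filter.mpr ⟨Finset.mem_product.mpr ⟨?_, ?_⟩, hslt⟩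
    · exact sf_mem_ge hS h1hi
    · exact sf_mem_lt hS h2lo
  · intro p hp
    obtain ⟨hp1, hp2⟩ := Finset.mem_product.mp (Finset.mem_filter.mp hp).1
    have hplt : p.1 < p.2 := (Finset.mem_filter.mp hp).2
    refine Finset.mem_filter.mpr ⟨Equiv.Perm.mem_finPairsLT.mpr (Fin.lt_def.mpr (by
        have := ((Sᶜ.orderIsoOfFin (card_compl' hS)).symm ⟨p.2, hp2⟩).isLt
        simp only [Fin.val_mk]
        omega)), ?_⟩
    rw [se_apply, se_apply]
    have e2 : (⟨((Sᶜ.orderIsoOfFin (card_compl' hS)).symm ⟨p.2, hp2⟩ : Fin (n+1)).val, by omega⟩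
        : Fin (2*n+2)) = ⟨(((Sᶜ.orderIsoOfFin (card_compl' hS)).symm ⟨p.2, hp2⟩ : Fin (n+1)) : ℕ), by omega⟩ := rfl
    rw [show (Sigma.mk _ _ : Σ _ : Fin (2*n+2), Fin (2*n+2)).1 = _ from rfl]
    rw [sf_apply_high hS, sf_apply_low hS, OrderIso.apply_symm_apply, OrderIso.apply_symm_apply]
    exact hplt.le
  · intro x hx
    obtain ⟨h2lo, h1hi, _⟩ := cross hS hx
    obtain ⟨x1, x2⟩ := x
    simp only at h2lo h1hi
    have m1 : sf S hS x1 ∈ S := sf_mem_ge hS h1hi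
    have m2 : sf S hS x2 ∈ Sᶜ := sf_mem_lt hS h2lo
    have e1 : sf S hS x1 = ((S.orderIsoOfFin hS) ⟨(x1:ℕ) - (n+1), by have := x1.isLt; exact Nat.sub_lt_left_of_lt_add (by omega) (by omega)⟩ : Fin (2*n+2)) := by
      rw [sf, dif_neg h1hi]
    have e2 : sf S hS x2 = ((Sᶜ.orderIsoOfFin (card_compl' hS)) ⟨(x2:ℕ), h2lo⟩ : Fin (2*n+2)) := by
      rw [sf, dif_pos h2lo]
    refine Sigma.ext ?_ ?h2
    case h2 =>
      apply heq_of_eq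
      apply Fin.ext
      simp only [Fin.val_mk]
      have : ((Sᶜ.orderIsoOfFin (card_compl' hS)).symm ⟨sf S hS x2, m2⟩ : Fin (n+1)) =
          ⟨(x2:ℕ), h2lo⟩ := by
        rw [show (⟨sf S hS x2, m2⟩ : {y // y ∈ Sᶜ}) =
            (Sᶜ.orderIsoOfFin (card_compl' hS)) ⟨(x2:ℕ), h2lo⟩ from
          Subtype.ext e2, OrderIso.symm_apply_apply]
      rw [this]
    · apply Fin.ext
      simp only [Fin.val_mk]
      have : ((S.orderIsoOfFin hS).symm ⟨sf S hS x1, m1⟩ : Fin (n+1)) =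
          ⟨(x1:ℕ) - (n+1), by have := x1.isLt; exact Nat.sub_lt_left_of_lt_add (by omega) (by omega)⟩ := by
        rw [show (⟨sf S hS x1, m1⟩ : {y // y ∈ S}) =
            (S.orderIsoOfFin hS) ⟨(x1:ℕ) - (n+1), by have := x1.isLt; exact Nat.sub_lt_left_of_lt_add (by omega) (by omega)⟩ from
          Subtype.ext e1, OrderIso.symm_apply_apply]
      rw [this]
      simp only [Fin.val_mk]
      omega
  · intro p hp
    obtain ⟨hp1, hp2⟩ := Finset.mem_product.mp (Finset.mem_filter.mp hp).1
    have := sf_apply_high hS ((S.orderIsoOfFin hS).symm ⟨p.1, hp1⟩)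
    have := sf_apply_low hS ((Sᶜ.orderIsoOfFin (card_compl' hS)).symm ⟨p.2, hp2⟩)
    refine Prod.ext ?_ ?_ <;> simp only []
    · rw [sf_apply_high hS, OrderIso.apply_symm_apply]
    · rw [sf_apply_low hS, OrderIso.apply_symm_apply]

theorem prod_filter_card {α : Type*} [DecidableEq α] [LinearOrder α] (S T : Finset α) :
    ((S ×ˢ T).filter fun p => p.1 < p.2).card = ∑ y ∈ S, (T.filter fun x => y < x).card := by
  rw [Finset.card_filter, Finset.sum_product]
  exact Finset.sum_congr rfl fun y _ => (Finset.card_filter _ _).symm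

theorem pointwise_count (y : Fin (2*n+2)) (S : Finset (Fin (2*n+2))) :
    (Sᶜ.filter fun x => y < x).card + (S.filter fun x => y < x).card + ((y:ℕ)+1) = 2*n+2 := by
  have hd : Disjoint (S.filter fun x => y < x) (Sᶜ.filter fun x => y < x) :=
    Finset.disjoint_filter_filter (disjoint_compl_right)
  have hu : (S.filter fun x => y < x) ∪ (Sᶜ.filter fun x => y < x)
      = Finset.univ.filter fun x => y < x := by
    rw [← Finset.filter_union, Finset.union_compl]
  have hcard := Finset.card_union_of_disjoint hd
  rw [hu] at hcard
  rw [Finset.filter_lt_eq_Ioi] at hcard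
  rw [Fin.card_Ioi] at hcard
  have := y.isLt
  omega

theorem c2_eq {S : Finset (Fin (2*n+2))} (hS : S.card = n+1) :
    ((S ×ˢ S).filter fun p => p.1 < p.2).card = n*(n+1)/2 := by
  have hb : ((S ×ˢ S).filter fun p => p.1 < p.2).card
      = (((Finset.univ : Finset (Fin (n+1))) ×ˢ Finset.univ).filter fun p => p.1 < p.2).card := by
    refine Finset.card_bij'
      (fun p hp => ((S.orderIsoOfFin hS).symm
          ⟨p.1, (Finset.mem_product.mp (Finset.mem_filter.mp hp).1).1⟩,
        (S.orderIsoOfFin hS).symm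
          ⟨p.2, (Finset.mem_product.mp (Finset.mem_filter.mp hp).1).2⟩))
      (fun q _ => (((S.orderIsoOfFin hS) q.1 : Fin (2*n+2)),
        ((S.orderIsoOfFin hS) q.2 : Fin (2*n+2)))) ?_ ?_ ?_ ?_
    · intro p hp
      refine Finset.mem_filter.mpr ⟨Finset.mem_product.mpr ⟨Finset.mem_univ _, Finset.mem_univ _⟩, ?_⟩
      exact (OrderIso.lt_iff_lt _).mpr (Subtype.mk_lt_mk.mpr (Finset.mem_filter.mp hp).2)
    · intro q hq
      refine Finset.mem_filter.mpr ⟨Finset.mem_product.mpr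
        ⟨Subtype.coe_prop _, Subtype.coe_prop _⟩, ?_⟩
      exact Subtype.coe_lt_coe.mpr ((OrderIso.lt_iff_lt _).mpr (Finset.mem_filter.mp hq).2)
    · intro p hp
      refine Prod.ext ?_ ?_ <;> simp only [] <;>
        rw [OrderIso.apply_symm_apply]
    · intro q hq
      refine Prod.ext ?_ ?_ <;> simp only [] <;>
        rw [Subtype.coe_eta, OrderIso.symm_apply_apply]
  rw [hb, prod_filter_card]
  have h1 : ∀ y : Fin (n+1), ((Finset.univ : Finset (Fin (n+1))).filter fun x => y < x).card
      = n - (y:ℕ) := by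
    intro y
    rw [Finset.filter_lt_eq_Ioi, Fin.card_Ioi]
    omega
  rw [Finset.sum_congr rfl fun y _ => h1 y]
  rw [Fin.sum_univ_eq_sum_range (fun i => n - i) (n+1)]
  have h2 := Finset.sum_range_reflect (fun i => n - i) (n+1)
  have h3 : ∀ j ∈ Finset.range (n+1), n - (n+1-1-j) = j := fun j hj => by
    have := Finset.mem_range.mp hj; omega
  rw [Finset.sum_congr rfl h3] at h2
  have h4 : (∑ i ∈ Finset.range (n+1), i) * 2 = n*(n+1) := by
    have h5 := Finset.sum_range_id_mul_two (n+1)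
    simp only [Nat.add_sub_cancel] at h5
    rw [Nat.mul_comm (n+1) n] at h5
    exact h5
  omega

theorem sign_se {S : Finset (Fin (2*n+2))} (hS : S.card = n+1) :
    (Equiv.Perm.sign (se S hS) : ℤˣ) = (-1) ^ (n*(n+1)/2 + ∑ i ∈ S, ((i:ℕ)+1)) := by
  rw [Stmt7.sign_eq_signAux (se S hS), Stmt7.signAux_eq_pow, inv_card hS]
  apply Stmt7.neg_one_pow_eq_of_even_add
  have key : ((S ×ˢ Sᶜ).filter fun p => p.1 < p.2).card
      + ((S ×ˢ S).filter fun p => p.1 < p.2).card + ∑ i ∈ S, ((i:ℕ)+1) = (n+1)*(2*n+2) := by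
    rw [prod_filter_card, prod_filter_card, ← Finset.sum_add_distrib, ← Finset.sum_add_distrib]
    rw [Finset.sum_congr rfl (fun y _ => pointwise_count y S)]
    rw [Finset.sum_const, hS, smul_eq_mul]
  have h2 := c2_eq hS
  obtain ⟨t, ht⟩ : Even ((n+1)*(2*n+2)) := ⟨(n+1)*(n+1), by ring⟩
  exact ⟨t, by omega⟩

variable {K : Type*} [CommRing K]

def urow (a : Fin (2*n+2) → Fin (n+1) → K) (j : Fin (2*n+2)) : Fin (2*n+2) → K :=
  fun c => if hc : (c:ℕ) < n+1 then a j ⟨c, hc⟩ else 0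

def vrow (a : Fin (2*n+2) → Fin (n+1) → K) (j : Fin (2*n+2)) : Fin (2*n+2) → K :=
  fun c => if hc : (c:ℕ) < n+1 then 0 else a j ⟨(c:ℕ)-(n+1), by have := c.isLt; exact Nat.sub_lt_left_of_lt_add (by omega) (by omega)⟩

def W (a : Fin (2*n+2) → Fin (n+1) → K) (S : Finset (Fin (2*n+2))) :
    Matrix (Fin (2*n+2)) (Fin (2*n+2)) K :=
  Matrix.of (S.piecewise (vrow a) (urow a))

theorem det_expand (a : Fin (2*n+2) → Fin (n+1) → K) (h : Fin (2*n+2) → K) :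
    (Matrix.of fun (j c : Fin (2*n+2)) =>
        if hc : (c : ℕ) < n + 1 then a j ⟨(c : ℕ), hc⟩
        else h j * a j ⟨(c : ℕ) - (n + 1), by have := c.isLt; exact Nat.sub_lt_left_of_lt_add (by omega) (by omega)⟩).det =
      ∑ S : Finset (Fin (2*n+2)), (∏ i ∈ S, h i) * (W a S).det := by
  have hM : (Matrix.of fun (j c : Fin (2*n+2)) =>
        if hc : (c : ℕ) < n + 1 then a j ⟨(c : ℕ), hc⟩
        else h j * a j ⟨(c : ℕ) - (n + 1), by have := c.isLt; exact Nat.sub_lt_left_of_lt_add (by omega) (by omega)⟩)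
      = Matrix.of ((fun j => h j • vrow a j) + urow a) := by
    ext j c
    by_cases hc : (c:ℕ) < n+1
    · simp [urow, vrow, hc, Nat.lt_succ_iff.mp hc]
    · simp [urow, vrow, hc, show ¬ (c:ℕ) ≤ n by omega]
  rw [hM]
  have e1 : (Matrix.of ((fun j => h j • vrow a j) + urow a)).det
      = (Matrix.detRowAlternating (R := K) (n := Fin (2*n+2))).toMultilinearMap
          ((fun j => h j • vrow a j) + urow a) := rfl
  rw [e1, MultilinearMap.map_add_univ]
  refine Finset.sum_congr rfl fun S _ => ?_
  have e2 : S.piecewise (fun j => h j • vrow a j) (urow a)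
      = fun j => (if j ∈ S then h j else 1) • (S.piecewise (vrow a) (urow a)) j := by
    funext j
    by_cases hj : j ∈ S
    · rw [Finset.piecewise_eq_of_mem _ _ _ hj, Finset.piecewise_eq_of_mem _ _ _ hj, if_pos hj]
    · rw [Finset.piecewise_eq_of_notMem _ _ _ hj, Finset.piecewise_eq_of_notMem _ _ _ hj,
        if_neg hj, one_smul]
  rw [e2, MultilinearMap.map_smul_univ, Finset.prod_ite_mem, Finset.univ_inter, smul_eq_mul]
  rfl

theorem card_lowcols : (Finset.univ.filter fun c : Fin (2*n+2) => (c:ℕ) < n+1).card = n+1 := by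
  have he : (Finset.univ.filter fun c : Fin (2*n+2) => (c:ℕ) < n+1)
      = Finset.Iio (⟨n+1, by omega⟩ : Fin (2*n+2)) := by
    ext c
    simp [Fin.lt_def]
  rw [he, Fin.card_Iio]

theorem card_highcols : (Finset.univ.filter fun c : Fin (2*n+2) => ¬ (c:ℕ) < n+1).card = n+1 := by
  have he : (Finset.univ.filter fun c : Fin (2*n+2) => ¬ (c:ℕ) < n+1)
      = Finset.Ici (⟨n+1, by omega⟩ : Fin (2*n+2)) := by
    ext c
    simp [Fin.le_def]
  rw [he, Fin.card_Ici]
  simp only [Fin.val_mk]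
  omega

theorem detW_eq_zero (a : Fin (2*n+2) → Fin (n+1) → K) {S : Finset (Fin (2*n+2))}
    (hcard : S.card ≠ n+1) : (W a S).det = 0 := by
  rw [Matrix.det_apply]
  refine Finset.sum_eq_zero fun σ _ => ?_
  suffices hzero : ∃ c, W a S (σ c) c = 0 by
    obtain ⟨c, hc⟩ := hzero
    have hp : ∏ i : Fin (2*n+2), W a S (σ i) i = 0 :=
      Finset.prod_eq_zero (Finset.mem_univ c) hc
    rw [hp, smul_zero]
  by_contra hall
  push_neg at hall
  have hmem1 : ∀ c : Fin (2*n+2), ¬ (c:ℕ) < n+1 → σ c ∈ S := by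
    intro c hc
    by_contra hs
    apply hall c
    show S.piecewise (vrow a) (urow a) (σ c) c = 0
    rw [Finset.piecewise_eq_of_notMem _ _ _ hs]
    rw [urow, dif_neg hc]
  have hmem2 : ∀ c : Fin (2*n+2), (c:ℕ) < n+1 → σ c ∈ Sᶜ := by
    intro c hc
    rw [Finset.mem_compl]
    by_contra hs
    apply hall c
    show S.piecewise (vrow a) (urow a) (σ c) c = 0
    rw [Finset.piecewise_eq_of_mem _ _ _ hs]
    rw [vrow, dif_pos hc]
  have hc1 : ((Finset.univ.filter fun c : Fin (2*n+2) => ¬ (c:ℕ) < n+1).image σ) ⊆ S := by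
    intro x hx
    obtain ⟨c, hc, rfl⟩ := Finset.mem_image.mp hx
    exact hmem1 c (Finset.mem_filter.mp hc).2
  have hc2 : ((Finset.univ.filter fun c : Fin (2*n+2) => (c:ℕ) < n+1).image σ) ⊆ Sᶜ := by
    intro x hx
    obtain ⟨c, hc, rfl⟩ := Finset.mem_image.mp hx
    exact hmem2 c (Finset.mem_filter.mp hc).2
  have hcc1 := Finset.card_le_card hc1
  have hcc2 := Finset.card_le_card hc2
  rw [Finset.card_image_of_injective _ σ.injective, card_highcols] at hcc1
  rw [Finset.card_image_of_injective _ σ.injective, card_lowcols] at hcc2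
  rw [Finset.card_compl] at hcc2
  simp only [Fintype.card_fin] at hcc2
  omega

def eqv (n : ℕ) : Fin (2*n+2) ≃ (Fin (n+1) ⊕ Fin (n+1)) where
  toFun k := if hk : (k:ℕ) < n+1 then Sum.inl ⟨k, hk⟩
    else Sum.inr ⟨(k:ℕ)-(n+1), by have := k.isLt; exact Nat.sub_lt_left_of_lt_add (by omega) (by omega)⟩
  invFun s := Sum.elim (fun i : Fin (n+1) => (⟨(i:ℕ), by omega⟩ : Fin (2*n+2)))
    (fun i : Fin (n+1) => (⟨n+1+(i:ℕ), by omega⟩ : Fin (2*n+2))) s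
  left_inv k := by
    by_cases hk : (k:ℕ) < n+1
    · simp only [dif_pos hk, Sum.elim_inl]
    · simp only [dif_neg hk, Sum.elim_inr]
      exact Fin.ext (by simp only [Fin.val_mk]; omega)
  right_inv s := by
    rcases s with i | i
    · simp only [Sum.elim_inl]
      exact dif_pos i.isLt
    · simp only [Sum.elim_inr]
      refine (dif_neg (show ¬ (n+1+(i:ℕ)) < n+1 by
        omega)).trans ?_
      exact congrArg _ (Fin.ext (by simp only [Fin.val_mk]; omega))

theorem detW_eq (a : Fin (2*n+2) → Fin (n+1) → K) {S : Finset (Fin (2*n+2))}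
    (hS : S.card = n+1) :
    (W a S).det = ((Equiv.Perm.sign (se S hS) : ℤ) : K) *
      ((Matrix.of fun (r c : Fin (n+1)) =>
          a ((Sᶜ).orderIsoOfFin (card_compl' hS) r) c).det *
       (Matrix.of fun (r c : Fin (n+1)) => a (S.orderIsoOfFin hS r) c).det) := by
  have hB : (W a S).submatrix (se S hS) id =
      (Matrix.fromBlocks
        (Matrix.of fun (r c : Fin (n+1)) => a ((Sᶜ).orderIsoOfFin (card_compl' hS) r) c) 0 0
        (Matrix.of fun (r c : Fin (n+1)) => a (S.orderIsoOfFin hS r) c)).submatrix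
        (eqv n) (eqv n) := by
    ext k c
    rw [Matrix.submatrix_apply, Matrix.submatrix_apply, id_eq]
    rw [show (W a S) (se S hS k) = S.piecewise (vrow a) (urow a) (sf S hS k) from rfl]
    by_cases hk : (k:ℕ) < n+1
    · rw [Finset.piecewise_eq_of_notMem _ _ _ (Finset.mem_compl.mp (sf_mem_lt hS hk))]
      rw [show eqv n k = Sum.inl ⟨(k:ℕ), hk⟩ from dif_pos hk]
      by_cases hc : (c:ℕ) < n+1
      · rw [show eqv n c = Sum.inl ⟨(c:ℕ), hc⟩ from dif_pos hc]
        rw [urow, dif_pos hc, Matrix.fromBlocks_apply₁₁]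
        rw [show sf S hS k = ((Sᶜ).orderIsoOfFin (card_compl' hS) ⟨(k:ℕ), hk⟩ : Fin (2*n+2))
          from by rw [sf, dif_pos hk]]
        rfl
      · rw [show eqv n c = Sum.inr ⟨(c:ℕ)-(n+1), by have := c.isLt; exact Nat.sub_lt_left_of_lt_add (by omega) (by omega)⟩ from dif_neg hc]
        rw [urow, dif_neg hc, Matrix.fromBlocks_apply₁₂]
        rfl
    · rw [Finset.piecewise_eq_of_mem _ _ _ (sf_mem_ge hS hk)]
      rw [show eqv n k = Sum.inr ⟨(k:ℕ)-(n+1), by have := k.isLt; exact Nat.sub_lt_left_of_lt_add (by omega) (by omega)⟩ from dif_neg hk]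
      by_cases hc : (c:ℕ) < n+1
      · rw [show eqv n c = Sum.inl ⟨(c:ℕ), hc⟩ from dif_pos hc]
        rw [vrow, dif_pos hc, Matrix.fromBlocks_apply₂₁]
        rfl
      · rw [show eqv n c = Sum.inr ⟨(c:ℕ)-(n+1), by have := c.isLt; exact Nat.sub_lt_left_of_lt_add (by omega) (by omega)⟩ from dif_neg hc]
        rw [vrow, dif_neg hc, Matrix.fromBlocks_apply₂₂]
        rw [show sf S hS k = (S.orderIsoOfFin hS ⟨(k:ℕ)-(n+1), by have := k.isLt; exact Nat.sub_lt_left_of_lt_add (by omega) (by omega)⟩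
            : Fin (2*n+2)) from by rw [sf, dif_neg hk]]
        rfl
  have hperm := Matrix.det_permute (se S hS) (W a S)
  rw [hB, Matrix.det_submatrix_equiv_self, Matrix.det_fromBlocks_zero₁₂] at hperm
  rcases Int.units_eq_one_or (Equiv.Perm.sign (se S hS)) with hsgn | hsgn <;>
    rw [hsgn] at hperm ⊢ <;>
    simp only [Units.val_one, Units.val_neg, Int.cast_one, Int.cast_neg, one_mul, neg_mul,
      one_smul] at hperm ⊢
  · exact hperm.symm
  · rw [hperm, neg_neg]

end Stmt7a

/-- Laplace expansion of the determinant of the `(2n+2) × (2n+2)` matrix with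
rows `(a_{j0}, …, a_{jn}, h_j a_{j0}, …, h_j a_{jn})` along the first `n+1`
columns. -/
theorem stmt_7 {K : Type*} [CommRing K] (n : ℕ)
    (a : Fin (2 * n + 2) → Fin (n + 1) → K) (h : Fin (2 * n + 2) → K) :
    (Matrix.of fun (j c : Fin (2 * n + 2)) =>
        if hc : (c : ℕ) < n + 1 then a j ⟨(c : ℕ), hc⟩
        else h j * a j ⟨(c : ℕ) - (n + 1), by have := c.isLt; omega⟩).det =
      ∑ I : {s : Finset (Fin (2 * n + 2)) // s.card = n + 1},
        (-1 : K) ^ (n * (n + 1) / 2 + ∑ i ∈ I.1, ((i : ℕ) + 1)) *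
          (Matrix.of fun (r c : Fin (n + 1)) =>
            a (I.1.orderIsoOfFin I.2 r) c).det *
          (Matrix.of fun (s c : Fin (n + 1)) =>
            a ((I.1ᶜ).orderIsoOfFin
              (by simp [Finset.card_compl, I.2]; omega) s) c).det *
          ∏ i ∈ I.1, h i := by
  rw [Stmt7a.det_expand a h]
  rw [← Finset.sum_filter_of_ne (p := fun s : Finset (Fin (2*n+2)) => s.card = n+1)
      (fun S _ hne => by
        by_contra hc
        exact hne (by rw [Stmt7a.detW_eq_zero a hc, mul_zero]))]
  rw [Finset.sum_subtype (p := fun s : Finset (Fin (2*n+2)) => s.card = n+1) _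
    (fun S => by simp) _]
  refine Finset.sum_congr rfl fun I _ => ?_
  obtain ⟨S, hS⟩ := I
  simp only []
  rw [Stmt7a.detW_eq a hS]
  have hcast : ((Equiv.Perm.sign (Stmt7a.se S hS) : ℤ) : K)
      = (-1 : K)^(n*(n+1)/2 + ∑ i ∈ S, ((i:ℕ)+1)) := by
    rw [Stmt7a.sign_se hS]
    simp [Units.val_pow_eq_pow_val]
  rw [hcast]
  ring
end

section
/- Let G be a torsion-free abelian group and x_1, ..., x_{2n+2} ∈ G such that for every subset I ⊆ {1,...,2n+2} with #I = n+1 there exists J ≠ I, #J = n+1, with ∏_{i∈I} x_i = ∏_{j∈J} x_j (this is property P_{2n+2,n+1}). Then there exist two distinct indices j_1 ≠ j_2 with x_{j_1} = x_{j_2}. -/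
open Finset

/-- Combinatorial core: if every `s`-subset admits a different `s`-subset with the same
`y`-sum (in a linearly ordered abelian group), then two values of `y` coincide. -/
lemma fuj_key {α : Type*} [AddCommGroup α] [LinearOrder α] [IsOrderedAddMonoid α] {m s : ℕ} (hs : 1 ≤ s) (hsm : s ≤ m)
    (y : Fin m → α)
    (hP : ∀ I : Finset (Fin m), I.card = s →
      ∃ J : Finset (Fin m), J ≠ I ∧ J.card = s ∧ (∑ i ∈ I, y i) = ∑ j ∈ J, y j) :
    ∃ i j : Fin m, i ≠ j ∧ y i = y j := by
  have hne : ((univ : Finset (Fin m)).powersetCard s).Nonempty :=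
    powersetCard_nonempty.2 (by simpa using hsm)
  obtain ⟨I, hIF, hImax⟩ := exists_max_image _ (fun J => ∑ i ∈ J, y i) hne
  have hI : I.card = s := (mem_powersetCard.1 hIF).2
  obtain ⟨J, hJne, hJcard, hsum⟩ := hP I hI
  -- swapping argument
  have swap : ∀ K : Finset (Fin m), K.card = s → (∑ i ∈ K, y i) = (∑ i ∈ I, y i) →
      ∀ a ∈ K, ∀ b, b ∉ K → y b ≤ y a := by
    intro K hK hKsum a ha b hb
    have hbK : b ∉ K.erase a := fun h => hb (mem_of_mem_erase h)
    have hcard : (insert b (K.erase a)).card = s := by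
      rw [card_insert_of_notMem hbK, card_erase_of_mem ha, hK]
      omega
    have hmem : insert b (K.erase a) ∈ (univ : Finset (Fin m)).powersetCard s :=
      mem_powersetCard.2 ⟨subset_univ _, hcard⟩
    have h2 := hImax _ hmem
    have h3 : ∑ i ∈ insert b (K.erase a), y i = y b + ((∑ i ∈ K, y i) - y a) := by
      rw [sum_insert hbK, sum_erase_eq_sub ha]
    rw [h3, hKsum] at h2
    have h4 : y a + (∑ i ∈ I, y i - y a) = ∑ i ∈ I, y i := by abel
    exact le_of_add_le_add_right (h2.trans_eq h4.symm)
  have hIJ : (I \ J).Nonempty := by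
    rw [sdiff_nonempty]
    intro hsub
    exact hJne (Finset.eq_of_subset_of_card_le hsub (by omega)).symm
  have hJI : (J \ I).Nonempty := by
    rw [sdiff_nonempty]
    intro hsub
    exact hJne (Finset.eq_of_subset_of_card_le hsub (by omega))
  obtain ⟨i, hi⟩ := hIJ
  obtain ⟨j, hj⟩ := hJI
  have hiI : i ∈ I := (mem_sdiff.1 hi).1
  have hiJ : i ∉ J := (mem_sdiff.1 hi).2
  have hjJ : j ∈ J := (mem_sdiff.1 hj).1
  have hjI : j ∉ I := (mem_sdiff.1 hj).2
  have h1 : y j ≤ y i := swap I hI rfl i hiI j hjI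
  have h2 : y i ≤ y j := swap J hJcard hsum.symm j hjJ i hiJ
  refine ⟨i, j, ?_, le_antisymm h2 h1⟩
  rintro rfl
  exact hiJ hjJ

/-- Specialization of Fujimoto's lemma: if `x₁, …, x_{2n+2}` in a torsion-free
abelian group have property `P_{2n+2, n+1}`, then two of them are equal. -/
theorem stmt_19 {G : Type*} [CommGroup G]
    (hG : ∀ g : G, ∀ k : ℕ, 1 ≤ k → g ^ k = 1 → g = 1)
    (n : ℕ) (x : Fin (2 * n + 2) → G)
    (hP : ∀ I : Finset (Fin (2 * n + 2)), I.card = n + 1 →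
      ∃ J : Finset (Fin (2 * n + 2)), J ≠ I ∧ J.card = n + 1 ∧
        (∏ i ∈ I, x i) = ∏ j ∈ J, x j) :
    ∃ j₁ j₂ : Fin (2 * n + 2), j₁ ≠ j₂ ∧ x j₁ = x j₂ := by
  classical
  -- torsion-freeness, additively
  haveI : NoZeroSMulDivisors ℤ (Additive G) := by
    refine ⟨fun {c a} h => ?_⟩
    by_cases hc : c = 0
    · exact Or.inl hc
    · right
      have hnat : (c.natAbs : ℤ) • a = 0 := by
        rcases Int.natAbs_eq c with h' | h'
        · rw [← h', h]
        · have hc' : (c.natAbs : ℤ) = -c := by omega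
          rw [hc', neg_smul, h, neg_zero]
      have : Additive.toMul a ^ c.natAbs = 1 := by
        rw [natCast_zsmul] at hnat
        have := congrArg Additive.toMul hnat
        simpa using this
      have := hG (Additive.toMul a) c.natAbs (by omega) this
      simpa using this
  set x' : Fin (2 * n + 2) → Additive G := fun i => Additive.ofMul (x i) with hx'
  set M : Submodule ℤ (Additive G) := Submodule.span ℤ (Set.range x') with hM
  haveI : Module.Finite ℤ M := Module.Finite.span_of_finite ℤ (Set.finite_range x')
  haveI : Module.Free ℤ M := Module.free_of_finite_type_torsion_free'
  set k : ℕ := Fintype.card (Module.Free.ChooseBasisIndex ℤ M) with hk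
  let b : Module.Basis (Fin k) ℤ M := (Module.Free.chooseBasis ℤ M).reindex (Fintype.equivFin _)
  haveI : IsOrderedAddMonoid (Lex (Fin k → ℤ)) := inferInstance
  let z : Fin (2 * n + 2) → M := fun i => ⟨x' i, Submodule.subset_span (Set.mem_range_self i)⟩
  let Y : M →+ Lex (Fin k → ℤ) :=
    { toFun := fun v => toLex (⇑(b.repr v))
      map_zero' := by simp
      map_add' := fun u v => by
        simp only [map_add, Finsupp.coe_add]
        rfl }
  have hYinj : Function.Injective Y := by
    intro u v huv
    have : ⇑(b.repr u) = ⇑(b.repr v) := huv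
    exact b.repr.injective (DFunLike.coe_injective this)
  let y : Fin (2 * n + 2) → Lex (Fin k → ℤ) := fun i => Y (z i)
  have key := fuj_key (α := Lex (Fin k → ℤ)) (m := 2 * n + 2) (s := n + 1)
    (by omega) (by omega) y ?_
  · obtain ⟨i, j, hij, hyij⟩ := key
    refine ⟨i, j, hij, ?_⟩
    have hz : z i = z j := hYinj hyij
    have : x' i = x' j := congrArg Subtype.val hz
    simpa [hx'] using this
  · intro I hI
    obtain ⟨J, hJne, hJcard, hprod⟩ := hP I hI
    refine ⟨J, hJne, hJcard, ?_⟩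
    have hz : (∑ i ∈ I, z i) = ∑ j ∈ J, z j := by
      apply Subtype.ext
      push_cast
      show ∑ i ∈ I, x' i = ∑ i ∈ J, x' i
      simp only [hx']
      rw [← ofMul_prod, ← ofMul_prod, hprod]
    calc (∑ i ∈ I, y i) = Y (∑ i ∈ I, z i) := (map_sum Y z I).symm
      _ = Y (∑ j ∈ J, z j) := by rw [hz]
      _ = ∑ j ∈ J, y j := map_sum Y z J
end
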